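/- The function γ(t) = q^{t(r₁-r₂+t+1)} [n choose t, r₂-t, r₁-r₂+t, n-r₁-t]_q satisfies the functional equation γ(t) = γ(t+1) · χ⁻(q^{-t-1})/χ⁺(q^{-t}) whenever t and t+1 lie in I_n(r₁,r₂), where χ⁺(u) = q^{r₁-r₂-1/2}(1-q^{r₂}u)(1-q^{n-r₁}u) and χ⁻(u) = q^{r₁-r₂-1/2}(1-u)(1-q^{r₂-r₁}u). -/

import Mathlib

noncomputable def qPoch (q : ℝ) (k : ℕ) : ℝ := ∏ j ∈ Finset.range k, (1 - q ^ (j + 1))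

noncomputable def qMultinom4 (q : ℝ) (n a b c d : ℕ) : ℝ :=
  qPoch q n / (qPoch q a * qPoch q b * qPoch q c * qPoch q d)

lemma qPoch_ne_zero {q : ℝ} (hq : 1 < q) (k : ℕ) : qPoch q k ≠ 0 := by
  refine Finset.prod_ne_zero_iff.mpr fun j _ => ?_
  have : 1 < q ^ (j + 1) := one_lt_pow₀ hq (Nat.succ_ne_zero j)
  linarith

lemma qPoch_succ (q : ℝ) (k : ℕ) : qPoch q (k + 1) = qPoch q k * (1 - q ^ (k + 1)) :=
  Finset.prod_range_succ _ _

set_option maxHeartbeats 1600000 in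
/-- The function `γ(t) = q^{t(r₁-r₂+t+1)} [n choose t, r₂-t, r₁-r₂+t, n-r₁-t]_q` satisfies
`γ(t) = γ(t+1) χ⁻(q^{-t-1})/χ⁺(q^{-t})` whenever `t, t+1 ∈ I_n(r₁,r₂)`, where
`χ⁺(u) = q^{r₁-r₂-1/2}(1-q^{r₂}u)(1-q^{n-r₁}u)` and
`χ⁻(u) = q^{r₁-r₂-1/2}(1-u)(1-q^{r₂-r₁}u)`. -/
theorem gamma_functional_equation (q : ℝ) (hq : 1 < q) (n r₁ r₂ : ℕ)
    (hr₁ : r₁ ≤ n) (hr₂ : r₂ ≤ n)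
    (γ : ℕ → ℝ)
    (hγ : ∀ t, γ t = q ^ (t * (r₁ + t + 1 - r₂)) *
      qMultinom4 q n t (r₂ - t) (r₁ + t - r₂) (n - r₁ - t))
    (χp χm : ℝ → ℝ)
    (hχp : ∀ u, χp u = q ^ ((r₁ : ℝ) - r₂ - 1 / 2) *
      (1 - q ^ (r₂ : ℝ) * u) * (1 - q ^ ((n : ℝ) - r₁) * u))
    (hχm : ∀ u, χm u = q ^ ((r₁ : ℝ) - r₂ - 1 / 2) *
      (1 - u) * (1 - q ^ ((r₂ : ℝ) - r₁) * u))
    (t : ℕ) (htlo : max 0 (r₂ - r₁) ≤ t) (hthi : t + 1 ≤ min r₂ (n - r₁)) :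
    γ t = γ (t + 1) * χm (q ^ (-(t : ℝ) - 1)) / χp (q ^ (-(t : ℝ))) := by
  have hq0 : (0:ℝ) < q := lt_trans one_pos hq
  obtain ⟨b, rfl⟩ : ∃ b, r₂ = t + 1 + b := ⟨r₂ - (t+1), by omega⟩
  obtain ⟨c, rfl⟩ : ∃ c, r₁ = b + c + 1 := ⟨r₁ - (b+1), by omega⟩
  obtain ⟨d, rfl⟩ : ∃ d, n = t + b + c + d + 2 := ⟨n - (t+b+c+2), by omega⟩
  rw [hγ, hγ, hχp, hχm]
  have e1 : (t + 1 + b) - t = b + 1 := by omega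
  have e2 : (b + c + 1) + t - (t + 1 + b) = c := by omega
  have e3 : (t + b + c + d + 2) - (b + c + 1) - t = d + 1 := by omega
  have e4 : (t + 1 + b) - (t + 1) = b := by omega
  have e5 : (b + c + 1) + (t + 1) - (t + 1 + b) = c + 1 := by omega
  have e6 : (t + b + c + d + 2) - (b + c + 1) - (t + 1) = d := by omega
  have e7 : t * ((b + c + 1) + t + 1 - (t + 1 + b)) = t * (c + 1) := by
    rw [show (b + c + 1) + t + 1 - (t + 1 + b) = c + 1 from by omega]
  have e8 : (t + 1) * ((b + c + 1) + (t + 1) + 1 - (t + 1 + b)) = t * (c + 1) + (t + 1) + (c + 1) := by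
    rw [show (b + c + 1) + (t + 1) + 1 - (t + 1 + b) = c + 2 from by omega]; ring
  rw [e1, e2, e3, e4, e5, e6, e7, e8]
  have hrp : ∀ (x y : ℝ), q ^ x * q ^ y = q ^ (x + y) := fun x y => (Real.rpow_add hq0 x y).symm
  have c1 : q ^ (((t + 1 + b : ℕ)):ℝ) * q ^ (-(t:ℝ)) = q ^ (b + 1 : ℕ) := by
    rw [hrp, ← Real.rpow_natCast q (b+1)]
    congr 1; push_cast; ring
  have c2 : q ^ ((((t + b + c + d + 2 : ℕ)):ℝ) - ((b + c + 1 : ℕ):ℝ)) * q ^ (-(t:ℝ)) = q ^ (d + 1 : ℕ) := by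
    rw [hrp, ← Real.rpow_natCast q (d+1)]
    congr 1; push_cast; ring
  have c3 : q ^ (-(t:ℝ) - 1) = (q ^ (t + 1 : ℕ))⁻¹ := by
    rw [← Real.rpow_natCast q (t+1), ← Real.rpow_neg hq0.le]
    congr 1; push_cast; ring
  have c4 : q ^ (((t + 1 + b : ℕ):ℝ) - ((b + c + 1 : ℕ):ℝ)) * q ^ (-(t:ℝ) - 1) = (q ^ (c + 1 : ℕ))⁻¹ := by
    rw [hrp, ← Real.rpow_natCast q (c+1), ← Real.rpow_neg hq0.le]
    congr 1; push_cast; ring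
  push_cast
  push_cast at c1 c2 c3 c4
  rw [c1, c2, c4, c3]
  simp only [qMultinom4]
  rw [show t*(c+1)+(t+1)+(c+1) = t*(c+1)+((t+1)+(c+1)) from by ring, pow_add, pow_add,
    qPoch_succ q t, qPoch_succ q b, qPoch_succ q c, qPoch_succ q d]
  have hA : q ^ (t + 1) ≠ 0 := pow_ne_zero _ (ne_of_gt hq0)
  have hC : q ^ (c + 1) ≠ 0 := pow_ne_zero _ (ne_of_gt hq0)
  have hB : (1 : ℝ) - q ^ (b + 1) ≠ 0 := by
    have : 1 < q ^ (b+1) := one_lt_pow₀ hq (Nat.succ_ne_zero b); linarith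
  have hD : (1 : ℝ) - q ^ (d + 1) ≠ 0 := by
    have : 1 < q ^ (d+1) := one_lt_pow₀ hq (Nat.succ_ne_zero d); linarith
  have hK : q ^ (((b:ℝ) + c + 1) - ((t:ℝ) + 1 + b) - 1 / 2) ≠ 0 :=
    ne_of_gt (Real.rpow_pos_of_pos hq0 _)
  have hA1 : (1 : ℝ) - q ^ (t + 1) ≠ 0 := by
    have : 1 < q ^ (t+1) := one_lt_pow₀ hq (Nat.succ_ne_zero t); linarith
  have hC1 : (1 : ℝ) - q ^ (c + 1) ≠ 0 := by
    have : 1 < q ^ (c+1) := one_lt_pow₀ hq (Nat.succ_ne_zero c); linarith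
  have pt := qPoch_ne_zero hq t
  have pb := qPoch_ne_zero hq b
  have pc := qPoch_ne_zero hq c
  have pd := qPoch_ne_zero hq d
  rw [eq_div_iff (by
    refine mul_ne_zero (mul_ne_zero hK ?_) hD
    exact hB)]
  field_simp
  ring
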